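/- Let (Σ,μ) be a σ-finite measure space, 1 < q < ∞, 1 ≤ r ≤ ∞, σ > 0, ω ∈ ℝ, ω′ ≥ 0, λ ≥ 0 and C > 0. Let u, v ∈ L^q_μ, and let F : L^q_μ → L^q_μ satisfy F(0) = 0 and |F(w)(x) − F(ŵ)(x)| ≤ ω′·|w(x) − ŵ(x)| for μ-a.e. x ∈ Σ and all w, ŵ ∈ L^q_μ. If ‖G_λ(u)‖_r^σ ≤ C·∫_Σ |G_λ(u)|^{q−2} G_λ(u) · ( v + ω(G_λ(u) + λ·sign(u)) ) dμ, then ‖G_λ(u)‖_r^σ ≤ C·∫_Σ |G_λ(u)|^{q−2} G_λ(u) · ( v + F(u) + (ω+ω′)(G_λ(u) + λ·sign(u)) ) dμ. -/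

import Mathlib

open MeasureTheory

/-- The signed truncator `G_λ(s) = sign(s) · max(|s| − λ, 0)`. -/
noncomputable def Gtrunc (lam s : ℝ) : ℝ := Real.sign s * max (|s| - lam) 0

/-- The signed power `r^β := |r|^(β−1) · r`; for `1 < q < ∞`,
`spow w (q−1) = |w|^(q−2)·w` is the weight appearing in the `q`-bracket. -/
noncomputable def spow (r β : ℝ) : ℝ := |r| ^ (β - 1) * r

lemma measurable_realSign : Measurable Real.sign := by
  unfold Real.sign
  exact Measurable.ite (measurableSet_lt measurable_id measurable_const) measurable_const
    (Measurable.ite (measurableSet_lt measurable_const measurable_id) measurable_const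
      measurable_const)

lemma measurable_gtrunc (lam : ℝ) : Measurable (Gtrunc lam) := by
  unfold Gtrunc
  exact measurable_realSign.mul ((measurable_id.abs.sub measurable_const).max measurable_const)

lemma measurable_spow (β : ℝ) : Measurable (fun a : ℝ => spow a β) := by
  unfold spow
  exact (measurable_id.abs.pow measurable_const).mul measurable_id

lemma gtrunc_abs_le {lam : ℝ} (hlam : 0 ≤ lam) (s : ℝ) : |Gtrunc lam s| ≤ |s| := by
  unfold Gtrunc
  rw [abs_mul]
  have h1 : |Real.sign s| ≤ 1 := by
    rcases Real.sign_apply_eq s with h | h | h <;> rw [h] <;> norm_num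
  have h2 : |max (|s| - lam) 0| ≤ |s| := by
    rw [abs_of_nonneg (le_max_right _ _)]
    exact max_le (by linarith [abs_nonneg s]) (abs_nonneg s)
  calc |Real.sign s| * |max (|s| - lam) 0| ≤ 1 * |s| :=
        mul_le_mul h1 h2 (abs_nonneg _) one_pos.le
    _ = |s| := one_mul _

lemma gtrunc_add_eq {lam : ℝ} (hlam : 0 ≤ lam) {s : ℝ} (h : Gtrunc lam s ≠ 0) :
    Gtrunc lam s + lam * Real.sign s = s := by
  unfold Gtrunc at *
  have hmax : max (|s| - lam) 0 ≠ 0 := fun h0 => h (by rw [h0, mul_zero])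
  have hpos : lam < |s| := by
    by_contra hc
    push_neg at hc
    exact hmax (max_eq_right (by linarith))
  rcases lt_trichotomy s 0 with hs | hs | hs
  · rw [Real.sign_of_neg hs, abs_of_neg hs] at *
    rw [max_eq_left (by linarith)]
    ring
  · subst hs
    rw [abs_zero] at hpos
    linarith
  · rw [Real.sign_of_pos hs, abs_of_pos hs] at *
    rw [max_eq_left (by linarith)]
    ring

lemma gtrunc_mul_self (lam s : ℝ) : Gtrunc lam s * s = |Gtrunc lam s| * |s| := by
  unfold Gtrunc
  have hM : (0:ℝ) ≤ max (|s| - lam) 0 := le_max_right _ _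
  rcases lt_trichotomy s 0 with hs | hs | hs
  · rw [Real.sign_of_neg hs, abs_mul, abs_of_nonneg hM, abs_of_neg hs]
    norm_num
  · subst hs; simp
  · rw [Real.sign_of_pos hs, abs_mul, abs_of_nonneg hM, abs_of_pos hs]
    norm_num

lemma abs_spow (a : ℝ) {β : ℝ} (hβ : 0 < β) : |spow a β| = |a| ^ β := by
  unfold spow
  rcases eq_or_ne a 0 with rfl | h
  · simp [Real.zero_rpow hβ.ne']
  · rw [abs_mul, abs_of_nonneg (Real.rpow_nonneg (abs_nonneg a) _),
      ← Real.rpow_add_one (abs_ne_zero.2 h)]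
    norm_num

lemma spow_gtrunc_mul {lam : ℝ} (hlam : 0 ≤ lam) (β s : ℝ) :
    spow (Gtrunc lam s) β * (Gtrunc lam s + lam * Real.sign s) =
      spow (Gtrunc lam s) β * s := by
  by_cases h : Gtrunc lam s = 0
  · simp [spow, h]
  · rw [gtrunc_add_eq hlam h]

/-- **Lemma 3.7**: the one-parameter Sobolev-type inequality
`‖G_λ(u)‖_r^σ ≤ C·[G_λ(u), v + ω(G_λ(u)+λ·sign u)]_q` is stable under adding a
pointwise `ω′`-Lipschitz perturbation `F` with `F(0) = 0`, at the cost of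
replacing `ω` by `ω + ω′`. -/
theorem stmt16 {X : Type*} [MeasurableSpace X] (μ : Measure X) [SigmaFinite μ]
    (q : ℝ) (hq : 1 < q) (r : ENNReal) (hr : 1 ≤ r)
    (σ ω ω' lam C : ℝ) (hσ : 0 < σ) (hω' : 0 ≤ ω') (hlam : 0 ≤ lam) (hC : 0 < C)
    (u v : X → ℝ)
    (hu : MemLp u (ENNReal.ofReal q) μ) (hv : MemLp v (ENNReal.ofReal q) μ)
    (F : (X → ℝ) → (X → ℝ))
    (hF0 : F (fun _ => 0) = fun _ => 0)
    (hFmap : ∀ w, MemLp w (ENNReal.ofReal q) μ → MemLp (F w) (ENNReal.ofReal q) μ)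
    (hFlip : ∀ w wh : X → ℝ, ∀ᵐ x ∂μ, |F w x - F wh x| ≤ ω' * |w x - wh x|)
    (hyp : eLpNorm (fun x => Gtrunc lam (u x)) r μ ^ σ ≤
        ENNReal.ofReal (C * ∫ x, spow (Gtrunc lam (u x)) (q - 1) *
          (v x + ω * (Gtrunc lam (u x) + lam * Real.sign (u x))) ∂μ)) :
    eLpNorm (fun x => Gtrunc lam (u x)) r μ ^ σ ≤
      ENNReal.ofReal (C * ∫ x, spow (Gtrunc lam (u x)) (q - 1) *
        (v x + F u x + (ω + ω') * (Gtrunc lam (u x) + lam * Real.sign (u x))) ∂μ) := by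
  have hq0 : (0:ℝ) < q := lt_trans one_pos hq
  have hq1 : (0:ℝ) < q - 1 := by linarith
  set Q := ENNReal.ofReal q with hQ
  set Q' := ENNReal.ofReal (q / (q - 1)) with hQ'
  -- membership of the truncation
  have hGae : AEStronglyMeasurable (fun x => Gtrunc lam (u x)) μ :=
    ((measurable_gtrunc lam).comp_aemeasurable hu.1.aemeasurable).aestronglyMeasurable
  have hG : MemLp (fun x => Gtrunc lam (u x)) Q μ :=
    MemLp.of_le hu hGae (Filter.Eventually.of_forall fun x => by
      simpa [Real.norm_eq_abs] using gtrunc_abs_le hlam (u x))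
  -- membership of the weight S in the conjugate space
  have hSae : AEStronglyMeasurable (fun x => spow (Gtrunc lam (u x)) (q - 1)) μ :=
    ((measurable_spow (q - 1)).comp_aemeasurable hGae.aemeasurable).aestronglyMeasurable
  have hS : MemLp (fun x => spow (Gtrunc lam (u x)) (q - 1)) Q' μ := by
    refine ⟨hSae, ?_⟩
    have h1 : eLpNorm (fun x => spow (Gtrunc lam (u x)) (q - 1)) Q' μ =
        eLpNorm (fun x => ‖Gtrunc lam (u x)‖ ^ (q - 1)) Q' μ :=
      eLpNorm_congr_norm_ae (Filter.Eventually.of_forall fun x => by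
        rw [Real.norm_eq_abs, Real.norm_eq_abs, abs_spow _ hq1, Real.norm_eq_abs,
          abs_of_nonneg (Real.rpow_nonneg (abs_nonneg _) _)])
    rw [h1, eLpNorm_norm_rpow _ hq1]
    have h2 : Q' * ENNReal.ofReal (q - 1) = Q := by
      rw [hQ', hQ, ← ENNReal.ofReal_mul (by positivity)]
      congr 1
      field_simp
    rw [h2]
    exact ENNReal.rpow_lt_top_of_nonneg hq1.le hG.2.ne
  -- conjugate exponents
  have hcon : (1:ENNReal) / 1 = 1 / Q' + 1 / Q := by
    rw [hQ, hQ', one_div, one_div, one_div, ← ENNReal.ofReal_inv_of_pos hq0,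
      ← ENNReal.ofReal_inv_of_pos (by positivity),
      ← ENNReal.ofReal_add (by positivity) (by positivity), inv_one, ← ENNReal.ofReal_one]
    congr 1
    rw [inv_div]
    field_simp
    ring
  -- Hölder: products are integrable
  have hint : ∀ w : X → ℝ, MemLp w Q μ →
      Integrable (fun x => spow (Gtrunc lam (u x)) (q - 1) * w x) μ := by
    intro w hw
    exact memLp_one_iff_integrable.mp (hw.smul hS (hpqr := ⟨by simpa [one_div] using hcon.symm⟩))
  have hFu : MemLp (F u) Q μ := hFmap u hu
  -- rewrite the two integrands
  have e_old : (fun x => spow (Gtrunc lam (u x)) (q - 1) *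
      (v x + ω * (Gtrunc lam (u x) + lam * Real.sign (u x)))) =
      fun x => spow (Gtrunc lam (u x)) (q - 1) * v x +
        ω * (spow (Gtrunc lam (u x)) (q - 1) * u x) := by
    funext x
    rw [← spow_gtrunc_mul hlam (q - 1) (u x)]
    ring
  have e_new : (fun x => spow (Gtrunc lam (u x)) (q - 1) *
      (v x + F u x + (ω + ω') * (Gtrunc lam (u x) + lam * Real.sign (u x)))) =
      fun x => (spow (Gtrunc lam (u x)) (q - 1) * v x +
        spow (Gtrunc lam (u x)) (q - 1) * F u x) +
        (ω + ω') * (spow (Gtrunc lam (u x)) (q - 1) * u x) := by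
    funext x
    rw [← spow_gtrunc_mul hlam (q - 1) (u x)]
    ring
  -- integrability of both rewritten integrands
  have hIold : Integrable (fun x => spow (Gtrunc lam (u x)) (q - 1) * v x +
      ω * (spow (Gtrunc lam (u x)) (q - 1) * u x)) μ :=
    (hint v hv).add ((hint u hu).const_mul ω)
  have hInew : Integrable (fun x => (spow (Gtrunc lam (u x)) (q - 1) * v x +
      spow (Gtrunc lam (u x)) (q - 1) * F u x) +
      (ω + ω') * (spow (Gtrunc lam (u x)) (q - 1) * u x)) μ :=
    ((hint v hv).add (hint (F u) hFu)).add ((hint u hu).const_mul (ω + ω'))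
  -- a.e. bound on F u
  have hFbound : ∀ᵐ x ∂μ, |F u x| ≤ ω' * |u x| := by
    filter_upwards [hFlip u (fun _ => 0)] with x hx
    simpa [hF0] using hx
  -- pointwise a.e. comparison of the integrands
  have hae : (fun x => spow (Gtrunc lam (u x)) (q - 1) * v x +
      ω * (spow (Gtrunc lam (u x)) (q - 1) * u x)) ≤ᵐ[μ]
      fun x => (spow (Gtrunc lam (u x)) (q - 1) * v x +
        spow (Gtrunc lam (u x)) (q - 1) * F u x) +
        (ω + ω') * (spow (Gtrunc lam (u x)) (q - 1) * u x) := by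
    filter_upwards [hFbound] with x hx
    set a := Gtrunc lam (u x) with ha
    have hA : (0:ℝ) ≤ |a| ^ (q - 1 - 1) := Real.rpow_nonneg (abs_nonneg _) _
    have hgu : a * u x = |a| * |u x| := gtrunc_mul_self lam (u x)
    have h2 : -(|a| * |F u x|) ≤ a * F u x := by
      calc -(|a| * |F u x|) = -|a * F u x| := by rw [abs_mul]
        _ ≤ a * F u x := neg_abs_le _
    have t1 : (|a| ^ (q - 1 - 1)) * (-(|a| * |F u x|)) ≤ (|a| ^ (q - 1 - 1)) * (a * F u x) :=
      mul_le_mul_of_nonneg_left h2 hA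
    have t2 : ((|a| ^ (q - 1 - 1)) * |a|) * |F u x| ≤
        ((|a| ^ (q - 1 - 1)) * |a|) * (ω' * |u x|) :=
      mul_le_mul_of_nonneg_left hx (mul_nonneg hA (abs_nonneg a))
    have t3 : ω' * ((|a| ^ (q - 1 - 1)) * (a * u x)) =
        ω' * ((|a| ^ (q - 1 - 1)) * (|a| * |u x|)) := by rw [hgu]
    have key : 0 ≤ spow a (q - 1) * F u x + ω' * (spow a (q - 1) * u x) := by
      unfold spow
      nlinarith [t1, t2, t3]
    linarith [key]
  -- conclude
  refine hyp.trans (ENNReal.ofReal_le_ofReal (mul_le_mul_of_nonneg_left ?_ hC.le))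
  rw [e_old, e_new]
  exact integral_mono_ae hIold hInew hae
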